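/- Let X, Y be Banach spaces and let (Z_k)_{k∈ℕ} be a countable family of Banach spaces. Suppose for each k there are bounded operators A_k : X → Z_k with ‖A_k‖ ≤ 1 and B_k : Z_k → Y, with Σ_k ‖B_k‖ < ∞, and set T_k := B_k ∘ A_k. Then the series Σ_k T_k converges absolutely in the operator norm of L(X,Y), and its sum T factors through the l_∞-direct sum Z := {(z_k) : z_k ∈ Z_k, sup_k ‖z_k‖ < ∞} (with norm ‖(z_k)‖ = sup_k ‖z_k‖): there exist bounded linear operators A : X → Z with ‖A‖ ≤ 1 (namely A x = (A_k x)_k) and B : Z → Y with ‖B‖ ≤ Σ_k ‖B_k‖ such that T = B ∘ A. -/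

import Mathlib

open scoped ENNReal

/-- Evaluation at a coordinate as a continuous linear map on `lp Z ∞`. -/
noncomputable def lpInftyEval (Z : ℕ → Type*) [∀ k, NormedAddCommGroup (Z k)]
    [∀ k, NormedSpace ℂ (Z k)] (k : ℕ) : lp Z ∞ →L[ℂ] Z k :=
  LinearMap.mkContinuous
    { toFun := fun f => f k
      map_add' := fun f g => by simp
      map_smul' := fun c f => by simp }
    1 (fun f => by
      show ‖(f : ∀ k, Z k) k‖ ≤ 1 * ‖f‖
      simpa using lp.norm_apply_le_norm ENNReal.top_ne_zero f k)

/-- if `A_k : X → Z_k` with `‖A_k‖ ≤ 1` and `B_k : Z_k → Y` with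
`∑_k ‖B_k‖ < ∞`, then `∑_k B_k ∘ A_k` converges absolutely in operator norm and
its sum `T` factors through the `l_∞`-direct sum `lp Z ∞` of the `Z_k`, via
`A x = (A_k x)_k` with `‖A‖ ≤ 1` and some `B` with `‖B‖ ≤ ∑_k ‖B_k‖`. -/
theorem series_factors_through_linfty_sum
    (X Y : Type*)
    [NormedAddCommGroup X] [NormedSpace ℂ X] [CompleteSpace X]
    [NormedAddCommGroup Y] [NormedSpace ℂ Y] [CompleteSpace Y]
    (Z : ℕ → Type*) [∀ k, NormedAddCommGroup (Z k)] [∀ k, NormedSpace ℂ (Z k)]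
    [∀ k, CompleteSpace (Z k)]
    (A : ∀ k, X →L[ℂ] Z k) (hA : ∀ k, ‖A k‖ ≤ 1)
    (B : ∀ k, Z k →L[ℂ] Y) (hB : Summable fun k => ‖B k‖) :
    Summable (fun k => ‖(B k).comp (A k)‖) ∧
    ∃ T : X →L[ℂ] Y, HasSum (fun k => (B k).comp (A k)) T ∧
      ∃ (A' : X →L[ℂ] lp Z ∞) (B' : lp Z ∞ →L[ℂ] Y),
        ‖A'‖ ≤ 1 ∧ ‖B'‖ ≤ ∑' k, ‖B k‖ ∧ T = B'.comp A' ∧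
        ∀ (v : X) (k : ℕ), (A' v : ∀ k, Z k) k = A k v := by
  -- bound on the composites
  have hcomp : ∀ k, ‖(B k).comp (A k)‖ ≤ ‖B k‖ := fun k =>
    ((B k).opNorm_comp_le (A k)).trans
      (by nlinarith [hA k, norm_nonneg (B k), norm_nonneg (A k)])
  have hsum : Summable (fun k => ‖(B k).comp (A k)‖) :=
    hB.of_nonneg_of_le (fun k => norm_nonneg _) hcomp
  refine ⟨hsum, ?_⟩
  -- A' : x ↦ (A k x)_k
  have hmem : ∀ x : X, Memℓp (fun k => A k x) ∞ := fun x =>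
    memℓp_infty ⟨‖x‖, by rintro - ⟨k, rfl⟩
                         exact ((A k).le_opNorm x).trans
                           (by nlinarith [hA k, norm_nonneg x])⟩
  let A' : X →L[ℂ] lp Z ∞ :=
    LinearMap.mkContinuous
      { toFun := fun x => ⟨fun k => A k x, hmem x⟩
        map_add' := fun x y => by ext k; simp [lp.coeFn_add, Pi.add_apply]; rfl
        map_smul' := fun c x => by ext k; simp [lp.coeFn_smul] }
      1 (fun x => by
        simp only [one_mul]
        exact lp.norm_le_of_forall_le (norm_nonneg x) fun k =>
          ((A k).le_opNorm x).trans (by nlinarith [hA k, norm_nonneg x]))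
  have hA'norm : ‖A'‖ ≤ 1 :=
    LinearMap.mkContinuous_norm_le _ zero_le_one _
  -- B' := ∑ k, B k ∘ eval k
  set C : ℕ → (lp Z ∞ →L[ℂ] Y) := fun k => (B k).comp (lpInftyEval Z k) with hC
  have hCnorm : ∀ k, ‖C k‖ ≤ ‖B k‖ := fun k => by
    refine ((B k).opNorm_comp_le _).trans ?_
    have h1 : ‖lpInftyEval Z k‖ ≤ 1 := LinearMap.mkContinuous_norm_le _ zero_le_one _
    nlinarith [norm_nonneg (B k), norm_nonneg (lpInftyEval Z k)]
  have hCsum : Summable (fun k => ‖C k‖) :=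
    hB.of_nonneg_of_le (fun k => norm_nonneg _) hCnorm
  have hCsum' : Summable C := hCsum.of_norm
  let B' : lp Z ∞ →L[ℂ] Y := ∑' k, C k
  have hB'sum : HasSum C B' := hCsum'.hasSum
  have hB'norm : ‖B'‖ ≤ ∑' k, ‖B k‖ := by
    refine (norm_tsum_le_tsum_norm hCsum).trans ?_
    exact Summable.tsum_le_tsum hCnorm hCsum hB
  -- composition
  have hCA : ∀ k, (C k).comp A' = (B k).comp (A k) := fun k => by
    ext x
    rfl
  have hTsum : HasSum (fun k => (B k).comp (A k)) (B'.comp A') := by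
    have := hB'sum.mapL ((ContinuousLinearMap.compL ℂ X (lp Z ∞) Y).flip A')
    simpa [hCA] using this
  exact ⟨B'.comp A', hTsum, A', B', hA'norm, hB'norm, rfl, fun v k => rfl⟩
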